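/- Let d ≥ 3 and let R, W, β > 0 with W ≤ R. Let ∂'U = {z ∈ ℝ^d : |z_1| < R, z_2²+⋯+z_d² = W²}, let ν = β·ν_{R,W}, and let S = {z ∈ ∂'U : |z_1| ≥ R/2}. Then there exists C > 0 depending only on d such that for every x ∈ ℝ^d with |x_1| ≤ R/3 and x_2²+⋯+x_d² ≤ (W/3)², |∫_S (w-x)/|w-x|^d dν(w)| ≤ C·β·W^{d-2}·R^{-(d-2)}. -/

import Mathlib

open MeasureTheory
open scoped ENNReal NNReal

set_option maxHeartbeats 1000000

/-- The lateral cylinder surface `P_{L,W} = {x ∈ ℝ^d : |x_1| ≤ L, x_2²+⋯+x_d² = W²}`. -/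
def cylSurf (d : ℕ) (h0 : 0 < d) (L W : ℝ) : Set (EuclideanSpace ℝ (Fin d)) :=
  {x | |x ⟨0, h0⟩| ≤ L ∧
    ∑ i ∈ Finset.univ.filter (fun i : Fin d => i ≠ ⟨0, h0⟩), (x i) ^ 2 = W ^ 2}

/-- The measure `ν_{L,W}` on `P_{L,W}`: absolutely continuous with respect to the
`(d-1)`-dimensional Hausdorff (surface area) measure, with density
`v(x_1) = 1 + (x_1+L)/(2L)` increasing linearly from `1` to `2`. -/
noncomputable def cylMeasure (d : ℕ) (h0 : 0 < d) (L W : ℝ) :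
    Measure (EuclideanSpace ℝ (Fin d)) :=
  ((μH[((d : ℝ) - 1)]).restrict (cylSurf d h0 L W)).withDensity
    (fun x => ENNReal.ofReal (1 + (x ⟨0, h0⟩ + L) / (2 * L)))

namespace WormholeAux

open Finset

lemma coord_le_norm {m : ℕ} (v : EuclideanSpace ℝ (Fin m)) (i : Fin m) : |v i| ≤ ‖v‖ := by
  rw [EuclideanSpace.norm_eq]
  have h1 : |v i| = Real.sqrt (‖v i‖ ^ 2) := by
    rw [Real.norm_eq_abs, sq_abs, Real.sqrt_sq_eq_abs]
  rw [h1]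
  exact Real.sqrt_le_sqrt (Finset.single_le_sum (f := fun j => ‖v j‖ ^ 2)
    (fun j _ => by positivity) (mem_univ i))

noncomputable def gfun (n : ℕ) (W : ℝ) (i0 : Fin n) (y : Fin n → ℝ) : ℝ :=
  Real.sqrt (W ^ 2 - ∑ j ∈ Finset.univ.erase i0, y j ^ 2)

noncomputable def Gmap (n : ℕ) (W : ℝ) (i0 : Fin n) (i : Fin (n + 1)) (s : ℝ)
    (y : Fin n → ℝ) : EuclideanSpace ℝ (Fin (n + 1)) :=
  WithLp.toLp 2 (Fin.insertNth i (s * gfun n W i0 y) y)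

def Kset (n : ℕ) (R W : ℝ) (i0 : Fin n) : Set (Fin n → ℝ) :=
  {y | |y i0| ≤ R ∧ ∑ j ∈ Finset.univ.erase i0, y j ^ 2 ≤ W ^ 2 - W ^ 2 / n}

lemma sqrt_sum_sub (n : ℕ) (i0 : Fin n) (y z : Fin n → ℝ) :
    (Real.sqrt (∑ j ∈ Finset.univ.erase i0, y j ^ 2) -
      Real.sqrt (∑ j ∈ Finset.univ.erase i0, z j ^ 2)) ^ 2 ≤
      ∑ j : Fin n, (y j - z j) ^ 2 := by
  set Y : EuclideanSpace ℝ (Fin n) := WithLp.toLp 2 (fun j => if j = i0 then 0 else y j) with hYdef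
  set Z : EuclideanSpace ℝ (Fin n) := WithLp.toLp 2 (fun j => if j = i0 then 0 else z j) with hZdef
  have hYc : ∀ x : Fin n, Y x = if x = i0 then (0:ℝ) else y x := fun x => by rw [hYdef]
  have hZc : ∀ x : Fin n, Z x = if x = i0 then (0:ℝ) else z x := fun x => by rw [hZdef]
  have hsum : ∀ (f : Fin n → ℝ), ∑ j : Fin n, (if j = i0 then (0:ℝ) else f j) ^ 2
      = ∑ j ∈ Finset.univ.erase i0, f j ^ 2 := by
    intro f
    have h1 : ∑ j ∈ Finset.univ.erase i0, (if j = i0 then (0:ℝ) else f j) ^ 2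
        = ∑ j ∈ Finset.univ.erase i0, f j ^ 2 :=
      Finset.sum_congr rfl fun j hj => by rw [if_neg (Finset.ne_of_mem_erase hj)]
    rw [← Finset.sum_erase_add _ _ (mem_univ i0), h1, if_pos rfl]
    simp
  have hY : ‖Y‖ = Real.sqrt (∑ j ∈ Finset.univ.erase i0, y j ^ 2) := by
    rw [EuclideanSpace.norm_eq]
    congr 1
    calc ∑ x : Fin n, ‖Y x‖ ^ 2
        = ∑ x : Fin n, (if x = i0 then (0:ℝ) else y x) ^ 2 :=
          Finset.sum_congr rfl fun x _ => by rw [hYc x, Real.norm_eq_abs, sq_abs]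
      _ = _ := hsum y
  have hZ : ‖Z‖ = Real.sqrt (∑ j ∈ Finset.univ.erase i0, z j ^ 2) := by
    rw [EuclideanSpace.norm_eq]
    congr 1
    calc ∑ x : Fin n, ‖Z x‖ ^ 2
        = ∑ x : Fin n, (if x = i0 then (0:ℝ) else z x) ^ 2 :=
          Finset.sum_congr rfl fun x _ => by rw [hZc x, Real.norm_eq_abs, sq_abs]
      _ = _ := hsum z
  have habs := abs_norm_sub_norm_le Y Z
  have hYZ : ‖Y - Z‖ ^ 2 ≤ ∑ j : Fin n, (y j - z j) ^ 2 := by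
    rw [EuclideanSpace.norm_eq, Real.sq_sqrt (by positivity)]
    apply Finset.sum_le_sum
    intro j _
    rw [PiLp.sub_apply, hYc j, hZc j]
    by_cases hj : j = i0
    · rw [if_pos hj, if_pos hj]
      simpa using sq_nonneg (y j - z j)
    · rw [if_neg hj, if_neg hj, Real.norm_eq_abs, sq_abs]
  calc (Real.sqrt (∑ j ∈ Finset.univ.erase i0, y j ^ 2) -
        Real.sqrt (∑ j ∈ Finset.univ.erase i0, z j ^ 2)) ^ 2
      = |‖Y‖ - ‖Z‖| ^ 2 := by rw [hY, hZ, sq_abs]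
    _ ≤ ‖Y - Z‖ ^ 2 := pow_le_pow_left₀ (abs_nonneg _) habs 2
    _ ≤ _ := hYZ

lemma g_sub_sq_le (n : ℕ) (hn : 2 ≤ n) (W : ℝ) (hW : 0 < W) (i0 : Fin n)
    {y z : Fin n → ℝ}
    (hy : ∑ j ∈ Finset.univ.erase i0, y j ^ 2 ≤ W ^ 2 - W ^ 2 / n)
    (hz : ∑ j ∈ Finset.univ.erase i0, z j ^ 2 ≤ W ^ 2 - W ^ 2 / n) :
    (gfun n W i0 y - gfun n W i0 z) ^ 2 ≤ (n : ℝ) * ∑ j : Fin n, (y j - z j) ^ 2 := by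
  have hn0 : (0:ℝ) < n := by
    have : (2:ℝ) ≤ (n:ℝ) := by exact_mod_cast hn
    linarith
  set Sy := ∑ j ∈ Finset.univ.erase i0, y j ^ 2 with hSydef
  set Sz := ∑ j ∈ Finset.univ.erase i0, z j ^ 2 with hSzdef
  have hSy0 : 0 ≤ Sy := Finset.sum_nonneg fun j _ => sq_nonneg _
  have hSz0 : 0 ≤ Sz := Finset.sum_nonneg fun j _ => sq_nonneg _
  have hWn : 0 < W ^ 2 / n := by positivity
  set gy := gfun n W i0 y with hgydef
  set gz := gfun n W i0 z with hgzdef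
  have hgy2 : gy ^ 2 = W ^ 2 - Sy := by
    rw [hgydef, gfun, ← hSydef]; exact Real.sq_sqrt (by linarith)
  have hgz2 : gz ^ 2 = W ^ 2 - Sz := by
    rw [hgzdef, gfun, ← hSzdef]; exact Real.sq_sqrt (by linarith)
  set m := Real.sqrt (W ^ 2 / n) with hmdef
  have hm2 : m ^ 2 = W ^ 2 / n := Real.sq_sqrt hWn.le
  have hm0 : 0 < m := Real.sqrt_pos.2 hWn
  have hgym : m ≤ gy := by
    rw [hgydef, gfun, ← hSydef]; exact Real.sqrt_le_sqrt (by linarith)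
  have hgzm : m ≤ gz := by
    rw [hgzdef, gfun, ← hSzdef]; exact Real.sqrt_le_sqrt (by linarith)
  set a := Real.sqrt Sy with hadef
  set b := Real.sqrt Sz with hbdef
  have ha2 : a ^ 2 = Sy := Real.sq_sqrt hSy0
  have hb2 : b ^ 2 = Sz := Real.sq_sqrt hSz0
  have ha0 : 0 ≤ a := Real.sqrt_nonneg _
  have hb0 : 0 ≤ b := Real.sqrt_nonneg _
  have haW : a ≤ W := by nlinarith [ha2]
  have hbW : b ≤ W := by nlinarith [hb2]
  have hkey : (gy - gz) * (gy + gz) = (b - a) * (b + a) := by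
    linear_combination hgy2 - hgz2 + ha2 - hb2
  have hab : (a - b) ^ 2 ≤ ∑ j : Fin n, (y j - z j) ^ 2 := sqrt_sum_sub n i0 y z
  set D := ∑ j : Fin n, (y j - z j) ^ 2 with hDdef
  have hD0 : 0 ≤ D := Finset.sum_nonneg fun _ _ => sq_nonneg _
  have h1 : (gy - gz) ^ 2 * (2 * m) ^ 2 ≤ ((b - a) * (b + a)) ^ 2 := by
    have h1a : (2 * m) ^ 2 ≤ (gy + gz) ^ 2 := by nlinarith
    calc (gy - gz) ^ 2 * (2 * m) ^ 2 ≤ (gy - gz) ^ 2 * (gy + gz) ^ 2 :=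
          mul_le_mul_of_nonneg_left h1a (sq_nonneg _)
      _ = ((gy - gz) * (gy + gz)) ^ 2 := by ring
      _ = ((b - a) * (b + a)) ^ 2 := by rw [hkey]
  have hW2 : W ^ 2 = (n : ℝ) * m ^ 2 := by rw [hm2]; field_simp
  have h2 : ((b - a) * (b + a)) ^ 2 ≤ (a - b) ^ 2 * (4 * ((n:ℝ) * m ^ 2)) := by
    have hba : (b + a) ^ 2 ≤ 4 * W ^ 2 := by nlinarith
    calc ((b - a) * (b + a)) ^ 2 = (a - b) ^ 2 * (b + a) ^ 2 := by ring
      _ ≤ (a - b) ^ 2 * (4 * W ^ 2) := mul_le_mul_of_nonneg_left hba (sq_nonneg _)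
      _ = (a - b) ^ 2 * (4 * ((n:ℝ) * m ^ 2)) := by rw [hW2]
  have h3 : (a - b) ^ 2 * (4 * ((n:ℝ) * m ^ 2)) ≤ ((n:ℝ) * D) * (2 * m) ^ 2 := by
    calc (a - b) ^ 2 * (4 * ((n:ℝ) * m ^ 2)) = ((n:ℝ) * (2 * m) ^ 2) * (a - b) ^ 2 := by ring
      _ ≤ ((n:ℝ) * (2 * m) ^ 2) * D := mul_le_mul_of_nonneg_left hab (by positivity)
      _ = ((n:ℝ) * D) * (2 * m) ^ 2 := by ring
  have hfin : (gy - gz) ^ 2 * (2 * m) ^ 2 ≤ ((n:ℝ) * D) * (2 * m) ^ 2 :=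
    le_trans h1 (le_trans h2 h3)
  exact le_of_mul_le_mul_right hfin (by positivity : (0:ℝ) < (2 * m) ^ 2)

lemma Gmap_lipschitz (n : ℕ) (hn : 2 ≤ n) (R W : ℝ) (hW : 0 < W) (i0 : Fin n)
    (i : Fin (n + 1)) (s : ℝ) (hs : s = -1 ∨ s = 1) :
    LipschitzOnWith ((n : NNReal) + 1) (Gmap n W i0 i s) (Kset n R W i0) := by
  apply LipschitzOnWith.of_dist_le_mul
  intro y hy z hz
  have hy2 := hy.2
  have hz2 := hz.2
  set gy := gfun n W i0 y with hgydef
  set gz := gfun n W i0 z with hgzdef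
  have hgg := g_sub_sq_le n hn W hW i0 hy2 hz2
  set D := ∑ j : Fin n, (y j - z j) ^ 2 with hDdef
  have hD0 : 0 ≤ D := Finset.sum_nonneg fun _ _ => sq_nonneg _
  have hterm : ∀ j : Fin n, (y j - z j) ^ 2 ≤ dist y z ^ 2 := by
    intro j
    have h := dist_le_pi_dist y z j
    rw [Real.dist_eq] at h
    calc (y j - z j) ^ 2 = |y j - z j| ^ 2 := (sq_abs _).symm
      _ ≤ dist y z ^ 2 := pow_le_pow_left₀ (abs_nonneg _) h 2
  have hDd : D ≤ (n : ℝ) * dist y z ^ 2 := by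
    have := Finset.sum_le_card_nsmul Finset.univ (fun j => (y j - z j) ^ 2) (dist y z ^ 2)
      (fun j _ => hterm j)
    simpa [Finset.card_univ, nsmul_eq_mul] using this
  have hGi : (Gmap n W i0 i s y - Gmap n W i0 i s z) i = s * gy - s * gz := by
    rw [PiLp.sub_apply]
    simp [Gmap, Fin.insertNth_apply_same, hgydef, hgzdef]
  have hGs : ∀ j : Fin n, (Gmap n W i0 i s y - Gmap n W i0 i s z) (i.succAbove j)
      = y j - z j := by
    intro j
    rw [PiLp.sub_apply]
    simp [Gmap, Fin.insertNth_apply_succAbove]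
  have hnorm : ‖Gmap n W i0 i s y - Gmap n W i0 i s z‖ ^ 2 = (s * gy - s * gz) ^ 2 + D := by
    rw [EuclideanSpace.norm_eq, Real.sq_sqrt (by positivity),
      Fin.sum_univ_succAbove (fun m => ‖(Gmap n W i0 i s y - Gmap n W i0 i s z) m‖ ^ 2) i]
    simp only [hGi, hGs, Real.norm_eq_abs, sq_abs]
    rfl
  have hs2 : s ^ 2 = 1 := by rcases hs with h | h <;> simp [h]
  have hsq : (s * gy - s * gz) ^ 2 = (gy - gz) ^ 2 := by
    linear_combination (gy - gz) ^ 2 * hs2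
  have hfinal : ‖Gmap n W i0 i s y - Gmap n W i0 i s z‖ ^ 2
      ≤ (((n:ℝ) + 1) * dist y z) ^ 2 := by
    rw [hnorm, hsq]
    have hstep : (n:ℝ) * D + D ≤ ((n:ℝ) + 1) * ((n:ℝ) * dist y z ^ 2) := by
      have := mul_le_mul_of_nonneg_left hDd (by positivity : (0:ℝ) ≤ (n:ℝ) + 1)
      nlinarith [this]
    have hd0 : (0:ℝ) ≤ dist y z := dist_nonneg
    nlinarith [hgg, hstep, hd0]
  have hBnn : (0:ℝ) ≤ ((n:ℝ) + 1) * dist y z := by positivity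
  have hmain : ‖Gmap n W i0 i s y - Gmap n W i0 i s z‖ ≤ ((n:ℝ) + 1) * dist y z := by
    calc ‖Gmap n W i0 i s y - Gmap n W i0 i s z‖
        = Real.sqrt (‖Gmap n W i0 i s y - Gmap n W i0 i s z‖ ^ 2) :=
          (Real.sqrt_sq (norm_nonneg _)).symm
      _ ≤ Real.sqrt ((((n:ℝ) + 1) * dist y z) ^ 2) := Real.sqrt_le_sqrt hfinal
      _ = ((n:ℝ) + 1) * dist y z := Real.sqrt_sq hBnn
  rw [dist_eq_norm]
  push_cast
  exact hmain

lemma cyl_cover (n : ℕ) (hn : 2 ≤ n) (R W : ℝ) (hW : 0 < W) :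
    cylSurf (n + 1) (Nat.succ_pos n) R W ⊆
      ⋃ i ∈ Finset.univ.erase (⟨0, Nat.succ_pos n⟩ : Fin (n + 1)),
        ⋃ s ∈ ({-1, 1} : Finset ℝ),
          Gmap n W ⟨0, by omega⟩ i s '' Kset n R W ⟨0, by omega⟩ := by
  intro w hw
  obtain ⟨hw1, hw2⟩ := hw
  have hn0 : (0:ℝ) < n := by
    have : (2:ℝ) ≤ (n:ℝ) := by exact_mod_cast hn
    linarith
  set i0 : Fin n := ⟨0, by omega⟩ with hi0def
  set z0 : Fin (n + 1) := ⟨0, Nat.succ_pos n⟩ with hz0def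
  rw [show (Finset.univ.filter (fun i : Fin (n+1) => i ≠ z0)) = Finset.univ.erase z0 from
    Finset.filter_ne' _ _] at hw2
  have hcard : (Finset.univ.erase z0).card = n := by
    rw [Finset.card_erase_of_mem (Finset.mem_univ _), Finset.card_univ, Fintype.card_fin]
    omega
  have hne : (Finset.univ.erase z0).Nonempty := by
    rw [← Finset.card_pos, hcard]; omega
  have hex : ∃ i ∈ Finset.univ.erase z0, W ^ 2 / n ≤ w i ^ 2 := by
    apply Finset.exists_le_of_sum_le hne
    have hconst : ∑ _i ∈ Finset.univ.erase z0, W ^ 2 / (n:ℝ) = W ^ 2 := by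
      rw [Finset.sum_const, hcard, nsmul_eq_mul]
      field_simp
    rw [hconst, hw2]
  obtain ⟨i, hi, hiW⟩ := hex
  have hine : i ≠ z0 := (Finset.mem_erase.1 hi).1
  have hipos : (0:ℕ) < i.1 := by
    rcases Nat.eq_zero_or_pos i.1 with h | h
    · exact absurd (Fin.ext h : i = z0) hine
    · exact h
  set y : Fin n → ℝ := fun j => w (i.succAbove j) with hydef
  have hy0 : i.succAbove i0 = z0 := by
    rw [Fin.succAbove_of_castSucc_lt]
    · rfl
    · rw [Fin.lt_def]
      exact hipos
  have hyi0 : y i0 = w z0 := by rw [hydef]; simp only; rw [hy0]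
  have hT : ∑ m : Fin (n + 1), w m ^ 2 = w z0 ^ 2 + W ^ 2 := by
    rw [← Finset.sum_erase_add _ _ (Finset.mem_univ z0), hw2]
    ring
  have hsum1 : ∑ j : Fin n, y j ^ 2 = ∑ m : Fin (n + 1), w m ^ 2 - w i ^ 2 := by
    rw [Fin.sum_univ_succAbove (fun m => w m ^ 2) i]
    simp [hydef]
  have hSy : ∑ j ∈ Finset.univ.erase i0, y j ^ 2 = W ^ 2 - w i ^ 2 := by
    have h := Finset.sum_erase_add Finset.univ (fun j => y j ^ 2) (Finset.mem_univ i0)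
    have h2 : ∑ j ∈ Finset.univ.erase i0, y j ^ 2 + y i0 ^ 2 = ∑ j : Fin n, y j ^ 2 := h
    rw [hyi0] at h2
    linarith [hsum1, hT, h2]
  have hyK : y ∈ Kset n R W i0 := by
    constructor
    · rw [hyi0]; exact hw1
    · rw [hSy]
      have : W ^ 2 / n ≤ w i ^ 2 := hiW
      linarith
  have hgy : gfun n W i0 y = |w i| := by
    rw [gfun, hSy, show W ^ 2 - (W ^ 2 - w i ^ 2) = w i ^ 2 by ring, Real.sqrt_sq_eq_abs]
  set s : ℝ := if 0 ≤ w i then 1 else -1 with hsdef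
  have hsmem : s ∈ ({-1, 1} : Finset ℝ) := by
    rw [hsdef]; split_ifs <;> simp
  have hsg : s * gfun n W i0 y = w i := by
    rw [hgy, hsdef]
    split_ifs with h
    · rw [one_mul, abs_of_nonneg h]
    · rw [abs_of_neg (not_le.1 h)]; ring
  have hGw : Gmap n W i0 i s y = w := by
    rw [Gmap, hsg]
    exact congrArg (WithLp.toLp 2) (Fin.insertNth_self_removeNth i w.ofLp)
  simp only [Set.mem_iUnion]
  exact ⟨i, hi, s, hsmem, y, hyK, hGw⟩

lemma cyl_measure_le (n : ℕ) (hn : 2 ≤ n) (R W : ℝ) (hR : 0 < R) (hW : 0 < W) :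
    μH[(n : ℝ)] (cylSurf (n + 1) (Nat.succ_pos n) R W) ≤
      ENNReal.ofReal ((n : ℝ) * ((n : ℝ) + 1) ^ n * 2 ^ (n + 1) * (R * W ^ (n - 1))) := by
  classical
  have hnn : 0 < n := by omega
  set i0 : Fin n := (⟨0, hnn⟩ : Fin n) with hi0
  have hn0 : (0:ℝ) < n := by exact_mod_cast hnn
  set c : ℝ := ((n : ℝ) + 1) ^ n * (2 * R * (2 * W) ^ (n - 1)) with hc
  have hc0 : 0 ≤ c := by positivity
  have hKbox : Kset n R W i0 ⊆ Set.univ.pi (fun j : Fin n =>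
      Set.Icc (-(if j = i0 then R else W)) (if j = i0 then R else W)) := by
    intro y hy j _
    dsimp only
    by_cases hj : j = i0
    · rw [if_pos hj, Set.mem_Icc]
      subst hj
      exact abs_le.1 hy.1
    · rw [if_neg hj, Set.mem_Icc]
      have hmem : j ∈ Finset.univ.erase i0 := Finset.mem_erase.2 ⟨hj, Finset.mem_univ _⟩
      have hle := Finset.single_le_sum (f := fun k => y k ^ 2) (fun k _ => sq_nonneg _) hmem
      have hWn : 0 < W ^ 2 / n := by positivity
      have hy2 := hy.2
      have hle' : y j ^ 2 ≤ ∑ x ∈ Finset.univ.erase i0, y x ^ 2 := hle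
      have hterm : y j ^ 2 ≤ W ^ 2 := by linarith
      have habs : |y j| ≤ W := by
        rw [← Real.sqrt_sq_eq_abs, ← Real.sqrt_sq hW.le]
        exact Real.sqrt_le_sqrt hterm
      constructor
      · linarith [neg_abs_le (y j)]
      · linarith [le_abs_self (y j)]
  have hvol : volume (Set.univ.pi (fun j : Fin n =>
      Set.Icc (-(if j = i0 then R else W)) (if j = i0 then R else W)))
      = ENNReal.ofReal (2 * R) * ENNReal.ofReal (2 * W) ^ (n - 1) := by
    rw [volume_pi_pi]
    rw [← Finset.mul_prod_erase _ _ (Finset.mem_univ i0)]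
    rw [if_pos rfl, Real.volume_Icc, show R - -R = 2 * R by ring]
    congr 1
    rw [Finset.prod_congr rfl (fun j hj => by
      rw [if_neg (Finset.ne_of_mem_erase hj), Real.volume_Icc,
        show W - -W = 2 * W by ring])]
    rw [Finset.prod_const, Finset.card_erase_of_mem (Finset.mem_univ _),
      Finset.card_univ, Fintype.card_fin]
  have hV : ∀ i ∈ Finset.univ.erase (⟨0, Nat.succ_pos n⟩ : Fin (n + 1)),
      ∀ s ∈ ({-1, 1} : Finset ℝ),
      μH[(n : ℝ)] (Gmap n W i0 i s '' Kset n R W i0) ≤ ENNReal.ofReal c := by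
    intro i _ s hsmem
    have hs : s = -1 ∨ s = 1 := by simpa using hsmem
    have hlip := Gmap_lipschitz n hn R W hW i0 i s hs
    have h1 := hlip.hausdorffMeasure_image_le (by positivity : (0:ℝ) ≤ (n:ℝ))
    refine le_trans h1 ?_
    have hμK : μH[(n : ℝ)] (Kset n R W i0) ≤
        ENNReal.ofReal (2 * R) * ENNReal.ofReal (2 * W) ^ (n - 1) := by
      rw [show ((n:ℝ)) = ((Fintype.card (Fin n) : ℕ) : ℝ) by simp]
      rw [hausdorffMeasure_pi_real]
      exact le_trans (measure_mono hKbox) (le_of_eq hvol)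
    have hcoe : (((n : NNReal) + 1 : NNReal) : ℝ≥0∞) ^ ((n:ℕ):ℝ)
        = ENNReal.ofReal (((n:ℝ) + 1) ^ n) := by
      rw [ENNReal.rpow_natCast, ENNReal.ofReal_pow (by positivity),
        ENNReal.ofReal_add (Nat.cast_nonneg n) zero_le_one,
        ENNReal.ofReal_natCast, ENNReal.ofReal_one]
      norm_cast
    calc (((n : NNReal) + 1 : NNReal) : ℝ≥0∞) ^ ((n:ℕ):ℝ) * μH[(n : ℝ)] (Kset n R W i0)
        ≤ ENNReal.ofReal (((n:ℝ) + 1) ^ n) *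
          (ENNReal.ofReal (2 * R) * ENNReal.ofReal (2 * W) ^ (n - 1)) := by
          rw [hcoe]; exact mul_le_mul_right hμK _
      _ = ENNReal.ofReal c := by
          rw [hc, ← ENNReal.ofReal_pow (by positivity), ← ENNReal.ofReal_mul (by positivity),
            ← ENNReal.ofReal_mul (by positivity)]
  calc μH[(n : ℝ)] (cylSurf (n + 1) (Nat.succ_pos n) R W)
      ≤ μH[(n : ℝ)] (⋃ i ∈ Finset.univ.erase (⟨0, Nat.succ_pos n⟩ : Fin (n + 1)),
          ⋃ s ∈ ({-1, 1} : Finset ℝ), Gmap n W i0 i s '' Kset n R W i0) :=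
        measure_mono (cyl_cover n hn R W hW)
    _ ≤ ∑ i ∈ Finset.univ.erase (⟨0, Nat.succ_pos n⟩ : Fin (n + 1)),
          μH[(n : ℝ)] (⋃ s ∈ ({-1, 1} : Finset ℝ), Gmap n W i0 i s '' Kset n R W i0) :=
        measure_biUnion_finset_le _ _
    _ ≤ ∑ i ∈ Finset.univ.erase (⟨0, Nat.succ_pos n⟩ : Fin (n + 1)),
          ∑ s ∈ ({-1, 1} : Finset ℝ), μH[(n : ℝ)] (Gmap n W i0 i s '' Kset n R W i0) :=
        Finset.sum_le_sum fun i _ => measure_biUnion_finset_le _ _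
    _ ≤ ∑ i ∈ Finset.univ.erase (⟨0, Nat.succ_pos n⟩ : Fin (n + 1)),
          ∑ s ∈ ({-1, 1} : Finset ℝ), ENNReal.ofReal c :=
        Finset.sum_le_sum fun i hi => Finset.sum_le_sum fun s hs => hV i hi s hs
    _ = (n : ℝ≥0∞) * (ENNReal.ofReal c + ENNReal.ofReal c) := by
        rw [Finset.sum_congr rfl (fun i _ => Finset.sum_pair (by norm_num : (-1:ℝ) ≠ 1))]
        rw [Finset.sum_const, Finset.card_erase_of_mem (Finset.mem_univ _),
          Finset.card_univ, Fintype.card_fin, nsmul_eq_mul]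
        norm_num
    _ = ENNReal.ofReal ((n : ℝ) * (c + c)) := by
        rw [← ENNReal.ofReal_natCast n, ← ENNReal.ofReal_add hc0 hc0,
          ← ENNReal.ofReal_mul (Nat.cast_nonneg n)]
    _ = ENNReal.ofReal ((n : ℝ) * ((n : ℝ) + 1) ^ n * 2 ^ (n + 1) * (R * W ^ (n - 1))) := by
        congr 1
        rw [hc, mul_pow, show (2:ℝ) ^ (n + 1) = 4 * 2 ^ (n - 1) by
          rw [show n + 1 = (n - 1) + 2 by omega, pow_add]; ring]
        ring

end WormholeAux

/-- Let `d ≥ 3` and `R, W, β > 0` with `W ≤ R`. Let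
`∂'U = {z : |z_1| < R, z_2²+⋯+z_d² = W²}`, `ν = β·ν_{R,W}` and
`S = {z ∈ ∂'U : |z_1| ≥ R/2}`. There exists `C > 0` depending only on `d` such that for
every `x` with `|x_1| ≤ R/3` and `x_2²+⋯+x_d² ≤ (W/3)²`,
`|∫_S (w-x)/|w-x|^d dν(w)| ≤ C·β·W^{d-2}·R^{-(d-2)}`. -/
theorem wormhole_outer_halves_force_bound (d : ℕ) (hd : 3 ≤ d) :
    ∃ C : ℝ, 0 < C ∧
      ∀ R W β : ℝ, 0 < R → 0 < W → 0 < β → W ≤ R →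
      ∀ x : EuclideanSpace ℝ (Fin d), |x ⟨0, by omega⟩| ≤ R / 3 →
        ∑ i ∈ Finset.univ.filter (fun i : Fin d => i ≠ ⟨0, by omega⟩), (x i) ^ 2
          ≤ (W / 3) ^ 2 →
        ‖∫ w in {w : EuclideanSpace ℝ (Fin d) |
              R / 2 ≤ |w ⟨0, by omega⟩| ∧ |w ⟨0, by omega⟩| < R},
            (‖w - x‖ ^ d)⁻¹ • (w - x) ∂(ENNReal.ofReal β • cylMeasure d (by omega) R W)‖ ≤
          C * β * W ^ (d - 2) / R ^ (d - 2) := by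
  obtain ⟨n, rfl⟩ : ∃ n, d = n + 1 := ⟨d - 1, by omega⟩
  have hn : 2 ≤ n := by omega
  refine ⟨(6:ℝ) ^ n * (2 * ((n:ℝ) * ((n:ℝ) + 1) ^ n * 2 ^ (n + 1))), by positivity, ?_⟩
  intro R W β hR hW hβ hWR x hx1 hx2
  have hn0 : (0:ℝ) < n := by exact_mod_cast (by omega : 0 < n)
  have h0 : 0 < n + 1 := by omega
  set i0 : Fin (n + 1) := ⟨0, h0⟩ with hi0
  have hcont : Continuous fun w : EuclideanSpace ℝ (Fin (n + 1)) => w i0 :=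
    (EuclideanSpace.proj (𝕜 := ℝ) i0).continuous
  have hSm : MeasurableSet {w : EuclideanSpace ℝ (Fin (n + 1)) |
      R / 2 ≤ |w i0| ∧ |w i0| < R} :=
    (measurableSet_le measurable_const hcont.abs.measurable).inter
      (measurableSet_lt hcont.abs.measurable measurable_const)
  have hcylS : cylMeasure (n + 1) h0 R W {w : EuclideanSpace ℝ (Fin (n + 1)) |
        R / 2 ≤ |w i0| ∧ |w i0| < R}
      ≤ ENNReal.ofReal (2 * ((n:ℝ) * ((n:ℝ) + 1) ^ n * 2 ^ (n + 1) * (R * W ^ (n - 1)))) := by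
    have hexp : ((n + 1 : ℕ) : ℝ) - 1 = (n : ℝ) := by push_cast; ring
    rw [cylMeasure]
    rw [withDensity_apply _ hSm, Measure.restrict_restrict hSm]
    have hb1 : ∀ w ∈ ({w : EuclideanSpace ℝ (Fin (n + 1)) | R / 2 ≤ |w i0| ∧ |w i0| < R}
        ∩ cylSurf (n + 1) h0 R W),
        ENNReal.ofReal (1 + (w i0 + R) / (2 * R)) ≤ 2 := by
      intro w hw
      have hwa : |w i0| ≤ R := hw.2.1
      have hw0 : w i0 ≤ R := le_trans (le_abs_self _) hwa
      have h2R : (0:ℝ) < 2 * R := by linarith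
      have hdiv : (w i0 + R) / (2 * R) ≤ 1 := by
        rw [div_le_one h2R]; linarith
      calc ENNReal.ofReal (1 + (w i0 + R) / (2 * R)) ≤ ENNReal.ofReal 2 :=
            ENNReal.ofReal_le_ofReal (by linarith)
        _ = 2 := ENNReal.ofReal_ofNat 2
    refine le_trans (setLIntegral_mono measurable_const hb1) ?_
    rw [setLIntegral_const]
    calc 2 * μH[((n + 1 : ℕ) : ℝ) - 1] ({w : EuclideanSpace ℝ (Fin (n + 1)) |
            R / 2 ≤ |w i0| ∧ |w i0| < R} ∩ cylSurf (n + 1) h0 R W)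
        ≤ 2 * μH[((n + 1 : ℕ) : ℝ) - 1] (cylSurf (n + 1) h0 R W) :=
          mul_le_mul_right (measure_mono Set.inter_subset_right) 2
      _ ≤ 2 * ENNReal.ofReal ((n:ℝ) * ((n:ℝ) + 1) ^ n * 2 ^ (n + 1) * (R * W ^ (n - 1))) := by
          rw [hexp]
          exact mul_le_mul_right (WormholeAux.cyl_measure_le n hn R W hR hW) 2
      _ = ENNReal.ofReal (2 * ((n:ℝ) * ((n:ℝ) + 1) ^ n * 2 ^ (n + 1) * (R * W ^ (n - 1)))) := by
          rw [ENNReal.ofReal_mul zero_le_two, ENNReal.ofReal_ofNat]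
  have hmass : (ENNReal.ofReal β • cylMeasure (n + 1) h0 R W)
      {w : EuclideanSpace ℝ (Fin (n + 1)) | R / 2 ≤ |w i0| ∧ |w i0| < R} < ⊤ := by
    rw [Measure.smul_apply, smul_eq_mul]
    exact ENNReal.mul_lt_top ENNReal.ofReal_lt_top
      (lt_of_le_of_lt hcylS ENNReal.ofReal_lt_top)
  have hCb : ∀ w ∈ {w : EuclideanSpace ℝ (Fin (n + 1)) | R / 2 ≤ |w i0| ∧ |w i0| < R},
      ‖(‖w - x‖ ^ (n + 1))⁻¹ • (w - x)‖ ≤ ((R / 6) ^ n)⁻¹ := by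
    intro w hw
    have hw1 : R / 2 ≤ |w i0| := hw.1
    have hx1' : |x i0| ≤ R / 3 := hx1
    have h6 : (0:ℝ) < R / 6 := by linarith
    have h1 : R / 6 ≤ |w i0 - x i0| := by
      have habs := abs_sub_abs_le_abs_sub (w i0) (x i0)
      linarith
    have h2 : |w i0 - x i0| ≤ ‖w - x‖ := by
      have hco := WormholeAux.coord_le_norm (w - x) i0
      rwa [PiLp.sub_apply] at hco
    have ht : R / 6 ≤ ‖w - x‖ := le_trans h1 h2
    have ht0 : (0:ℝ) < ‖w - x‖ := lt_of_lt_of_le h6 ht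
    have hne : ‖w - x‖ ≠ 0 := ne_of_gt ht0
    rw [norm_smul, Real.norm_eq_abs, abs_of_nonneg (by positivity)]
    have heq : (‖w - x‖ ^ (n + 1))⁻¹ * ‖w - x‖ = (‖w - x‖ ^ n)⁻¹ := by
      rw [pow_succ, mul_inv, mul_assoc, inv_mul_cancel₀ hne, mul_one]
    rw [heq]
    exact inv_anti₀ (by positivity) (pow_le_pow_left₀ h6.le ht n)
  have hsub : Continuous fun w : EuclideanSpace ℝ (Fin (n + 1)) => w - x :=
    continuous_id.sub continuous_const
  have hfm : AEStronglyMeasurable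
      (fun w : EuclideanSpace ℝ (Fin (n + 1)) => (‖w - x‖ ^ (n + 1))⁻¹ • (w - x))
      ((ENNReal.ofReal β • cylMeasure (n + 1) h0 R W).restrict
        {w : EuclideanSpace ℝ (Fin (n + 1)) | R / 2 ≤ |w i0| ∧ |w i0| < R}) := by
    apply Measurable.aestronglyMeasurable
    exact ((hsub.norm.pow (n + 1)).measurable.inv).smul hsub.measurable
  refine le_trans (norm_setIntegral_le_of_norm_le_const hmass hCb) ?_
  have htoReal : ((ENNReal.ofReal β • cylMeasure (n + 1) h0 R W)
      {w : EuclideanSpace ℝ (Fin (n + 1)) | R / 2 ≤ |w i0| ∧ |w i0| < R}).toReal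
      ≤ β * (2 * ((n:ℝ) * ((n:ℝ) + 1) ^ n * 2 ^ (n + 1) * (R * W ^ (n - 1)))) := by
    rw [Measure.smul_apply, smul_eq_mul, ENNReal.toReal_mul, ENNReal.toReal_ofReal hβ.le]
    exact mul_le_mul_of_nonneg_left
      (ENNReal.toReal_le_of_le_ofReal (by positivity) hcylS) hβ.le
  calc ((R / 6) ^ n)⁻¹ * ((ENNReal.ofReal β • cylMeasure (n + 1) h0 R W)
        {w : EuclideanSpace ℝ (Fin (n + 1)) | R / 2 ≤ |w i0| ∧ |w i0| < R}).toReal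
      ≤ ((R / 6) ^ n)⁻¹ *
          (β * (2 * ((n:ℝ) * ((n:ℝ) + 1) ^ n * 2 ^ (n + 1) * (R * W ^ (n - 1))))) :=
        mul_le_mul_of_nonneg_left htoReal (by positivity)
    _ = (6:ℝ) ^ n * (2 * ((n:ℝ) * ((n:ℝ) + 1) ^ n * 2 ^ (n + 1))) * β *
          W ^ (n + 1 - 2) / R ^ (n + 1 - 2) := by
        have hexp2 : n + 1 - 2 = n - 1 := rfl
        have hRn : R ^ n = R ^ (n - 1) * R := by
          rw [← pow_succ, show n - 1 + 1 = n by omega]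
        rw [hexp2, div_pow, hRn]
        have hR1 : R ^ (n - 1) ≠ 0 := by positivity
        field_simp
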